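/- For every positive real b and all n ≥ 1, the Genocchi-type polynomials with parameters (1, b, b) satisfy the reflection-type recurrence 𝒢_n(x+1; 1, b, b) = 2n (ln b)^{n−1} x^{n−1} − 𝒢_n(x; 1, b, b). -/

import Mathlib

open Real Finset

lemma coeff_eq_zero_of_hasSum_zero {c : ℕ → ℝ} {r : ℝ} (hr : 0 < r)
    (h : ∀ t : ℝ, |t| < r → HasSum (fun n => c n * t ^ n) 0) : ∀ n, c n = 0 := by
  set p := FormalMultilinearSeries.ofScalars ℝ c with hp
  have hr2 : (0:ℝ) < r / 2 := by linarith
  set r' : NNReal := ⟨r/2, hr2.le⟩ with hr'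
  have habs : |r / 2| < r := by rw [abs_of_pos hr2]; linarith
  have hrad : (r' : ENNReal) ≤ p.radius := by
    apply p.le_radius_of_tendsto (l := 0)
    have ht := (h (r/2) habs).summable.tendsto_atTop_zero
    have heq : ∀ n, ‖p n‖ * (r' : ℝ) ^ n = |c n * (r/2) ^ n| := by
      intro n
      rw [hp, FormalMultilinearSeries.ofScalars_norm, abs_mul, abs_pow, abs_of_pos hr2]
      rfl
    simp only [heq]
    simpa using ht.abs
  have hball : HasFPowerSeriesOnBall (fun _ : ℝ => (0:ℝ)) p 0 r' := by
    refine ⟨hrad, by exact_mod_cast hr2, fun {y} hy => ?_⟩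
    rw [mem_emetric_ball_zero_iff] at hy
    have hy' : |y| < r := by
      have h1 : ‖y‖₊ < r' := by exact_mod_cast hy
      have h2 : (‖y‖₊ : ℝ) < (r' : ℝ) := h1
      calc |y| = ‖y‖ := rfl
        _ < r / 2 := h2
        _ < r := by linarith
    simp only [hp, FormalMultilinearSeries.ofScalars_apply_eq, smul_eq_mul]
    exact h y hy'
  have hz : p = 0 := hball.hasFPowerSeriesAt.eq_zero
  intro n
  have hpn : p n = 0 := congrFun hz n
  exact (FormalMultilinearSeries.ofScalars_eq_zero ℝ n).mp hpn

theorem genocchi_type_reflection_recurrence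
    (b : ℝ) (hb : 0 < b) (hb1 : b ≠ 1)
    (𝒢P : ℕ → ℝ → ℝ)
    (h𝒢P : ∀ x t : ℝ, |t| < Real.pi / |Real.log 1 - Real.log b| →
      HasSum (fun n : ℕ => 𝒢P n x * t ^ n / n.factorial)
        (2 * t / (b ^ t + (1 : ℝ) ^ t) * b ^ (x * t))) :
    ∀ (n : ℕ), 1 ≤ n → ∀ x : ℝ,
      𝒢P n (x + 1) = 2 * n * (Real.log b) ^ (n - 1) * x ^ (n - 1) - 𝒢P n x := by
  intro n hn x
  have hlb : Real.log b ≠ 0 := Real.log_ne_zero_of_pos_of_ne_one hb hb1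
  set r := Real.pi / |Real.log 1 - Real.log b| with hrdef
  have hr : 0 < r := by
    apply div_pos Real.pi_pos
    rw [Real.log_one, zero_sub, abs_neg]
    exact abs_pos.mpr hlb
  set d : ℕ → ℝ := fun k => 2 * k * (Real.log b) ^ (k - 1) * x ^ (k - 1) with hd
  set c : ℕ → ℝ := fun k => (𝒢P k (x + 1) + 𝒢P k x - d k) / k.factorial with hc
  have key : ∀ t : ℝ, |t| < r → HasSum (fun k => c k * t ^ k) 0 := by
    intro t ht
    have h1 := h𝒢P (x + 1) t ht
    have h2 := h𝒢P x t ht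
    have h3 : HasSum (fun m : ℕ => (Real.log b * (x * t)) ^ m / m.factorial * (2 * t))
        (Real.exp (Real.log b * (x * t)) * (2 * t)) := by
      have := NormedSpace.expSeries_div_hasSum_exp (Real.log b * (x * t))
      rw [← Real.exp_eq_exp_ℝ] at this
      exact this.mul_right _
    have h3' : HasSum (fun m : ℕ => d (m + 1) * t ^ (m + 1) / (m + 1).factorial)
        (Real.exp (Real.log b * (x * t)) * (2 * t)) := by
      refine h3.congr_fun fun m => ?_
      have hfact : (((m + 1).factorial : ℕ) : ℝ) = ((m : ℝ) + 1) * m.factorial := by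
        rw [Nat.factorial_succ]; push_cast; ring
      have hm0 : ((m : ℝ) + 1) ≠ 0 := by positivity
      have hf0 : ((m.factorial : ℕ) : ℝ) ≠ 0 := Nat.cast_ne_zero.mpr m.factorial_ne_zero
      simp only [hd, Nat.add_sub_cancel, hfact]
      push_cast
      field_simp
      ring
    have h4 : HasSum (fun k : ℕ => d k * t ^ k / k.factorial)
        (Real.exp (Real.log b * (x * t)) * (2 * t)) := by
      have := (hasSum_nat_add_iff (f := fun k : ℕ => d k * t ^ k / k.factorial) 1).mp
        (by simpa using h3')
      simpa [hd] using this
    have h5 := (h1.add h2).sub h4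
    have hbt : (0:ℝ) < b ^ t := Real.rpow_pos_of_pos hb t
    have hbt1 : b ^ t + (1:ℝ) ≠ 0 := by positivity
    have hval : 2 * t / (b ^ t + (1:ℝ) ^ t) * b ^ ((x + 1) * t)
        + 2 * t / (b ^ t + (1:ℝ) ^ t) * b ^ (x * t)
        - Real.exp (Real.log b * (x * t)) * (2 * t) = 0 := by
      rw [Real.one_rpow, ← Real.rpow_def_of_pos hb (x * t)]
      have : b ^ ((x + 1) * t) = b ^ (x * t) * b ^ t := by
        rw [← Real.rpow_add hb]; ring_nf
      rw [this]
      field_simp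
      ring
    rw [hval] at h5
    refine h5.congr_fun fun k => ?_
    have hf0 : ((k.factorial : ℕ) : ℝ) ≠ 0 := Nat.cast_ne_zero.mpr k.factorial_ne_zero
    simp only [hc]
    field_simp
  have hcn : c n = 0 := coeff_eq_zero_of_hasSum_zero hr key n
  have hf0 : ((n.factorial : ℕ) : ℝ) ≠ 0 := Nat.cast_ne_zero.mpr n.factorial_ne_zero
  have : 𝒢P n (x + 1) + 𝒢P n x - d n = 0 := by
    have := hcn
    rw [hc] at this
    field_simp at this
    linarith [this]
  simp only [hd] at this
  linarith [this]
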